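/- arXiv:1903.06007 — 3 statements merged into one kernel-verified Lean document; each statement's English description precedes it below -/
import Mathlib

section
/- The optimization functional f ↦ f^T D_γ^{-1} L^γ D_γ^{-1} f + μ (f-y)^T D_γ^{-1} (f-y), with μ > 0, is minimized at f = μ (L^γ D_γ^{-1} + μ I)^{-1} y, and in particular the matrix L^γ D_γ^{-1} + μ I is invertible. -/
open Matrix Finset

/-- The functional `f ↦ fᵀ D_γ⁻¹ L^γ D_γ⁻¹ f + μ (f-y)ᵀ D_γ⁻¹ (f-y)` is minimized at
`f = μ (L^γ D_γ⁻¹ + μ I)⁻¹ y`, and the matrix `L^γ D_γ⁻¹ + μ I` is invertible. -/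
theorem lgamma_pagerank_minimizer {N : ℕ} (Lγ : Matrix (Fin N) (Fin N) ℝ)
    (hpsd : Lγ.PosSemidef) (hdpos : ∀ u, 0 < Lγ u u)
    (μ : ℝ) (hμ : 0 < μ) (y : Fin N → ℝ)
    (Dinv : Matrix (Fin N) (Fin N) ℝ)
    (hDinv : Dinv = (Matrix.diagonal fun u => Lγ u u)⁻¹)
    (F : (Fin N → ℝ) → ℝ)
    (hF : ∀ g, F g = g ⬝ᵥ (Dinv *ᵥ (Lγ *ᵥ (Dinv *ᵥ g))) + μ * ((g - y) ⬝ᵥ (Dinv *ᵥ (g - y)))) :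
    IsUnit (Lγ * Dinv + μ • (1 : Matrix (Fin N) (Fin N) ℝ)).det ∧
    ∀ f : Fin N → ℝ,
      F (μ • ((Lγ * Dinv + μ • (1 : Matrix (Fin N) (Fin N) ℝ))⁻¹ *ᵥ y)) ≤ F f := by
  -- Dinv is the diagonal matrix of reciprocal diagonal entries
  have hD' : Dinv = Matrix.diagonal (fun u => (Lγ u u)⁻¹) := by
    rw [hDinv]
    apply Matrix.inv_eq_right_inv
    rw [Matrix.diagonal_mul_diagonal]
    have : (fun i => Lγ i i * (Lγ i i)⁻¹) = fun _ => (1 : ℝ) :=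
      funext fun i => mul_inv_cancel₀ (hdpos i).ne'
    rw [this, Matrix.diagonal_one]
  set D : Matrix (Fin N) (Fin N) ℝ := Matrix.diagonal (fun u => Lγ u u) with hDdef
  have hDDinv : D * Dinv = 1 := by
    rw [hD', hDdef, Matrix.diagonal_mul_diagonal]
    have : (fun i => Lγ i i * (Lγ i i)⁻¹) = fun _ => (1 : ℝ) :=
      funext fun i => mul_inv_cancel₀ (hdpos i).ne'
    rw [this, Matrix.diagonal_one]
  -- positive definiteness of Dinv
  have hDinvPD : Dinv.PosDef := by
    rw [hD']; exact Matrix.posDef_diagonal_iff.mpr fun i => inv_pos.mpr (hdpos i)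
  have hDinvH : Dinvᴴ = Dinv := by
    rw [hD']; simp [Matrix.diagonal_conjTranspose]
  -- B := Dinv * Lγ * Dinv + μ • Dinv is positive definite
  set B : Matrix (Fin N) (Fin N) ℝ := Dinv * Lγ * Dinv + μ • Dinv with hBdef
  have hB1 : (Dinv * Lγ * Dinv).PosSemidef := by
    have := hpsd.mul_mul_conjTranspose_same Dinv
    rwa [hDinvH] at this
  have hB2 : (μ • Dinv).PosDef := by
    rw [hD', ← Matrix.diagonal_smul]
    exact Matrix.posDef_diagonal_iff.mpr fun i => by
      simp only [Pi.smul_apply, smul_eq_mul]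
      exact mul_pos hμ (inv_pos.mpr (hdpos i))
  have hBPD : B.PosDef := Matrix.PosDef.posSemidef_add hB1 hB2
  set M : Matrix (Fin N) (Fin N) ℝ := Lγ * Dinv + μ • (1 : Matrix (Fin N) (Fin N) ℝ) with hMdef
  have hDB : D * B = M := by
    rw [hBdef, hMdef, Matrix.mul_add]
    congr 1
    · rw [← Matrix.mul_assoc, ← Matrix.mul_assoc, hDDinv, Matrix.one_mul]
    · rw [Matrix.mul_smul, hDDinv]
  have hdetM : IsUnit M.det := by
    have hdetD : IsUnit D.det := by
      rw [hDdef, Matrix.det_diagonal]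
      exact isUnit_iff_ne_zero.mpr (Finset.prod_pos fun i _ => hdpos i).ne'
    rw [← hDB, Matrix.det_mul]
    exact hdetD.mul (isUnit_iff_ne_zero.mpr hBPD.det_pos.ne')
  refine ⟨hdetM, fun f => ?_⟩
  set fs : Fin N → ℝ := μ • (M⁻¹ *ᵥ y) with hfs
  -- key: B *ᵥ fs = μ • (Dinv *ᵥ y)
  have hMfs : M *ᵥ fs = μ • y := by
    rw [hfs, Matrix.mulVec_smul, Matrix.mulVec_mulVec, Matrix.mul_nonsing_inv _ hdetM,
      Matrix.one_mulVec]
  have hBfs : B *ᵥ fs = μ • (Dinv *ᵥ y) := by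
    have hDinvM : Dinv * M = B := by
      rw [← hDB, ← Matrix.mul_assoc]
      have : Dinv * D = 1 := by
        rw [hD', hDdef, Matrix.diagonal_mul_diagonal]
        have : (fun i => (Lγ i i)⁻¹ * Lγ i i) = fun _ => (1 : ℝ) :=
          funext fun i => inv_mul_cancel₀ (hdpos i).ne'
        rw [this, Matrix.diagonal_one]
      rw [this, Matrix.one_mul]
    rw [← hDinvM, ← Matrix.mulVec_mulVec, hMfs, Matrix.mulVec_smul]
  -- symmetry fact for B
  have hBsym : ∀ v w : Fin N → ℝ, v ⬝ᵥ (B *ᵥ w) = w ⬝ᵥ (B *ᵥ v) := by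
    intro v w
    have hBT : Bᵀ = B := by
      rw [← Matrix.conjTranspose_eq_transpose_of_trivial]; exact hBPD.isHermitian
    rw [Matrix.dotProduct_mulVec, ← Matrix.mulVec_transpose, hBT, dotProduct_comm]
  have hDinvsym : ∀ v w : Fin N → ℝ, v ⬝ᵥ (Dinv *ᵥ w) = w ⬝ᵥ (Dinv *ᵥ v) := by
    intro v w
    rw [Matrix.dotProduct_mulVec, ← Matrix.mulVec_transpose,
      show Dinvᵀ = Dinv from (Matrix.conjTranspose_eq_transpose_of_trivial Dinv) ▸ hDinvH,
      dotProduct_comm]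
  -- rewrite F
  have hFexp : ∀ g, F g = g ⬝ᵥ (B *ᵥ g) - 2 * μ * (g ⬝ᵥ (Dinv *ᵥ y)) + μ * (y ⬝ᵥ (Dinv *ᵥ y)) := by
    intro g
    rw [hF g, hBdef]
    rw [Matrix.add_mulVec, dotProduct_add, Matrix.smul_mulVec,
      dotProduct_smul, smul_eq_mul, ← Matrix.mulVec_mulVec, ← Matrix.mulVec_mulVec]
    have h1 : (g - y) ⬝ᵥ (Dinv *ᵥ (g - y))
        = g ⬝ᵥ (Dinv *ᵥ g) - 2 * (g ⬝ᵥ (Dinv *ᵥ y)) + y ⬝ᵥ (Dinv *ᵥ y) := by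
      rw [Matrix.mulVec_sub, sub_dotProduct, dotProduct_sub,
        dotProduct_sub, hDinvsym y g]
      ring
    rw [h1]
    ring
  -- decompose F f - F fs
  have key : F f - F fs = (f - fs) ⬝ᵥ (B *ᵥ (f - fs)) := by
    rw [hFexp f, hFexp fs]
    rw [Matrix.mulVec_sub, sub_dotProduct, dotProduct_sub, dotProduct_sub]
    have h2 : f ⬝ᵥ (B *ᵥ fs) = μ * (f ⬝ᵥ (Dinv *ᵥ y)) := by
      rw [hBfs, dotProduct_smul]; simp [smul_eq_mul]
    have h3 : fs ⬝ᵥ (B *ᵥ fs) = μ * (fs ⬝ᵥ (Dinv *ᵥ y)) := by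
      rw [hBfs, dotProduct_smul]; simp [smul_eq_mul]
    have h4 : fs ⬝ᵥ (B *ᵥ f) = f ⬝ᵥ (B *ᵥ fs) := hBsym fs f
    rw [h4, h2, h3]
    ring
  have hnonneg : 0 ≤ (f - fs) ⬝ᵥ (B *ᵥ (f - fs)) := hBPD.posSemidef.dotProduct_mulVec_nonneg (f - fs)
  linarith [key ▸ hnonneg]
end

section
/- Let S be a vertex set with vol_γ(S) ≤ vol_γ(G)/2, and let y = D_γ 𝟙_S / vol_γ(S). Then the L^γ-PageRank vector f = μ(L^γ D_γ^{-1} + μI)^{-1} y satisfies 𝟙_{S^c}^T f ≤ h_S^{(γ)}/μ, where h_S^{(γ)} = 𝟙_S^T L^γ 𝟙_S / vol_γ(S). -/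
open Matrix Finset

/-- If `vol_γ(S) ≤ vol_γ(G)/2` and `y = D_γ 𝟙_S / vol_γ(S)`, then the `L^γ`-PageRank
vector `f = μ (L^γ D_γ⁻¹ + μ I)⁻¹ y` satisfies `𝟙_{Sᶜ}ᵀ f ≤ h_S^{(γ)} / μ`, where
`h_S^{(γ)} = 𝟙_Sᵀ L^γ 𝟙_S / vol_γ(S)`. -/
theorem lgamma_pagerank_escape_bound {N : ℕ} (Lγ : Matrix (Fin N) (Fin N) ℝ)
    (hpsd : Lγ.PosSemidef) (hdpos : ∀ u, 0 < Lγ u u)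
    (hone : Lγ *ᵥ (fun _ => (1 : ℝ)) = 0)
    (μ : ℝ) (hμ : 0 < μ)
    (S : Finset (Fin N)) (hS : S.Nonempty)
    (hvol : ∑ u ∈ S, Lγ u u ≤ (∑ u, Lγ u u) / 2)
    (Dinv : Matrix (Fin N) (Fin N) ℝ)
    (hDinv : Dinv = (Matrix.diagonal fun u => Lγ u u)⁻¹)
    (y : Fin N → ℝ)
    (hy : y = fun u => (if u ∈ S then Lγ u u else 0) / ∑ w ∈ S, Lγ w w)
    (f : Fin N → ℝ)
    (hf : f = μ • ((Lγ * Dinv + μ • (1 : Matrix (Fin N) (Fin N) ℝ))⁻¹ *ᵥ y)) :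
    ∑ v ∈ Sᶜ, f v ≤
      ((fun u => if u ∈ S then (1 : ℝ) else 0) ⬝ᵥ
          (Lγ *ᵥ fun u => if u ∈ S then (1 : ℝ) else 0)) / (∑ u ∈ S, Lγ u u) / μ := by
  classical
  set d : Fin N → ℝ := fun u => Lγ u u with hd
  set D : Matrix (Fin N) (Fin N) ℝ := Matrix.diagonal d with hD
  set χ : Fin N → ℝ := fun u => if u ∈ S then 1 else 0 with hχ
  set vol : ℝ := ∑ u ∈ S, Lγ u u with hvoldef
  have hvolpos : 0 < vol := Finset.sum_pos (fun u _ => hdpos u) hS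
  -- D is invertible
  have hDdet : IsUnit D.det := by
    rw [hD, Matrix.det_diagonal]
    exact (Finset.prod_pos (fun u _ => hdpos u)).ne'.isUnit
  have hDDinv : D * Dinv = 1 := by rw [hDinv]; exact Matrix.mul_nonsing_inv D hDdet
  -- the symmetric positive definite matrix P
  set P : Matrix (Fin N) (Fin N) ℝ := Lγ + μ • D with hP
  have hDpd : D.PosDef := Matrix.PosDef.diagonal hdpos
  have hμDpd : (μ • D).PosDef := by
    have : μ • D = Matrix.diagonal (fun u => μ * d u) := by
      rw [show (fun u => μ * d u) = μ • d from rfl, Matrix.diagonal_smul]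
    rw [this]
    exact Matrix.PosDef.diagonal fun u => mul_pos hμ (hdpos u)
  have hPpd : P.PosDef := Matrix.PosDef.posSemidef_add hpsd hμDpd
  set Q : Matrix (Fin N) (Fin N) ℝ := P⁻¹ with hQ
  have hQpd : Q.PosDef := hPpd.inv
  have hPQ : P * Q = 1 := Matrix.mul_nonsing_inv P (isUnit_iff_isUnit_det P |>.mp hPpd.isUnit)
  have hQP : Q * P = 1 := Matrix.nonsing_inv_mul P (isUnit_iff_isUnit_det P |>.mp hPpd.isUnit)
  -- rewrite the inverse in f
  have hfac : Lγ * Dinv + μ • (1 : Matrix (Fin N) (Fin N) ℝ) = P * Dinv := by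
    rw [hP, Matrix.add_mul, Matrix.smul_mul]
    congr 1
    rw [hDinv, Matrix.mul_nonsing_inv D hDdet]
  have hinv : (Lγ * Dinv + μ • (1 : Matrix (Fin N) (Fin N) ℝ))⁻¹ = D * Q := by
    rw [hfac, Matrix.mul_inv_rev, hDinv, Matrix.nonsing_inv_nonsing_inv D hDdet, hQ]
  -- y = vol⁻¹ • (D *ᵥ χ)
  have hyχ : y = vol⁻¹ • (D *ᵥ χ) := by
    funext u
    simp only [hy, hD, Pi.smul_apply, Matrix.mulVec_diagonal, hχ, smul_eq_mul]
    by_cases h : u ∈ S <;> simp [h, div_eq_inv_mul, hvoldef, mul_comm, hd]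
  set g : Fin N → ℝ := Q *ᵥ (D *ᵥ χ) with hg
  have hfg : f = (μ * vol⁻¹) • (D *ᵥ g) := by
    rw [hf, hinv, hyχ, Matrix.mulVec_smul, ← Matrix.mulVec_mulVec, hg, smul_smul]
  -- symmetry of Lγ
  have hT : Lγᵀ = Lγ := by
    have := hpsd.isHermitian
    rwa [Matrix.IsHermitian, Matrix.conjTranspose_eq_transpose_of_trivial] at this
  have hsym : ∀ u v : Fin N → ℝ, u ⬝ᵥ (Lγ *ᵥ v) = (Lγ *ᵥ u) ⬝ᵥ v := by
    intro u v
    rw [Matrix.dotProduct_mulVec, ← Matrix.mulVec_transpose, hT]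
  have honeL : ∀ v : Fin N → ℝ, (fun _ => (1 : ℝ)) ⬝ᵥ (Lγ *ᵥ v) = 0 := by
    intro v; rw [hsym, hone, zero_dotProduct]
  -- P g = D χ
  have hPg : Lγ *ᵥ g + μ • (D *ᵥ g) = D *ᵥ χ := by
    have : P *ᵥ g = D *ᵥ χ := by
      rw [hg, Matrix.mulVec_mulVec, hPQ, Matrix.one_mulVec]
    rw [← this, hP, Matrix.add_mulVec, Matrix.smul_mulVec]
  -- dχ values
  have hdotDχ : ∀ w : Fin N → ℝ, w ⬝ᵥ (D *ᵥ χ) = ∑ u ∈ S, w u * d u := by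
    intro w
    rw [dotProduct]
    rw [← Finset.sum_filter_add_sum_filter_not Finset.univ (· ∈ S)]
    have h1 : ∀ u : Fin N, u ∈ S → w u * (D *ᵥ χ) u = w u * d u := by
      intro u hu; simp [hD, Matrix.mulVec_diagonal, hχ, hu]
    have h2 : ∀ u : Fin N, u ∉ S → w u * (D *ᵥ χ) u = 0 := by
      intro u hu; simp [hD, Matrix.mulVec_diagonal, hχ, hu]
    rw [Finset.sum_congr rfl (fun u hu => h1 u (by simpa using hu)),
      Finset.sum_eq_zero (fun u hu => h2 u (by simpa using hu))]
    simp [Finset.filter_mem_eq_inter]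
  have honeDχ : (fun _ => (1 : ℝ)) ⬝ᵥ (D *ᵥ χ) = vol := by
    rw [hdotDχ]; simp [hvoldef, hd]
  have hχDχ : χ ⬝ᵥ (D *ᵥ χ) = vol := by
    rw [hdotDχ]
    rw [hvoldef]
    exact Finset.sum_congr rfl fun u hu => by simp [hχ, hu, hd]
  -- 𝟙 ⬝ᵥ (D *ᵥ g) and χ ⬝ᵥ (D *ᵥ g)
  have h1Dg : μ * ((fun _ => (1 : ℝ)) ⬝ᵥ (D *ᵥ g)) = vol := by
    have := congrArg (fun v => (fun _ => (1 : ℝ)) ⬝ᵥ v) hPg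
    simp only [dotProduct_add, dotProduct_smul, smul_eq_mul, honeL,
      honeDχ, zero_add] at this
    exact this
  have hχDg : μ * (χ ⬝ᵥ (D *ᵥ g)) = vol - χ ⬝ᵥ (Lγ *ᵥ g) := by
    have := congrArg (fun v => χ ⬝ᵥ v) hPg
    simp only [dotProduct_add, dotProduct_smul, smul_eq_mul, hχDχ] at this
    linarith
  -- the key quadratic form term
  set x : Fin N → ℝ := Lγ *ᵥ χ with hx
  have hχLg : μ * (χ ⬝ᵥ (Lγ *ᵥ g)) = χ ⬝ᵥ (Lγ *ᵥ χ) - x ⬝ᵥ (Q *ᵥ x) := by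
    have hDχ : μ • (D *ᵥ χ) = P *ᵥ χ - x := by
      rw [hP, Matrix.add_mulVec, Matrix.smul_mulVec, hx]; ring_nf
    have h1 : χ ⬝ᵥ (Lγ *ᵥ g) = x ⬝ᵥ (Q *ᵥ (D *ᵥ χ)) := by
      rw [hsym, hx, hg]
    have h2 : x ⬝ᵥ (Q *ᵥ (P *ᵥ χ)) = x ⬝ᵥ χ := by
      rw [Matrix.mulVec_mulVec, hQP, Matrix.one_mulVec]
    have h3 : x ⬝ᵥ χ = χ ⬝ᵥ (Lγ *ᵥ χ) := (hsym χ χ).symm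
    calc μ * (χ ⬝ᵥ (Lγ *ᵥ g)) = x ⬝ᵥ (Q *ᵥ (μ • (D *ᵥ χ))) := by
          rw [h1, Matrix.mulVec_smul, dotProduct_smul, smul_eq_mul]
      _ = x ⬝ᵥ (Q *ᵥ (P *ᵥ χ)) - x ⬝ᵥ (Q *ᵥ x) := by
          rw [hDχ, Matrix.mulVec_sub, dotProduct_sub]
      _ = χ ⬝ᵥ (Lγ *ᵥ χ) - x ⬝ᵥ (Q *ᵥ x) := by rw [h2, h3]
  have hQnn : 0 ≤ x ⬝ᵥ (Q *ᵥ x) := by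
    have := hQpd.posSemidef.dotProduct_mulVec_nonneg x
    simpa using this
  -- sum over complement
  have hsumc : ∑ v ∈ Sᶜ, f v = (fun _ => (1 : ℝ)) ⬝ᵥ f - χ ⬝ᵥ f := by
    rw [dotProduct, dotProduct]
    have : ∑ v, χ v * f v = ∑ v ∈ S, f v := by
      rw [← Finset.sum_filter_add_sum_filter_not Finset.univ (· ∈ S)]
      have e1 : ∑ v ∈ Finset.univ.filter (· ∈ S), χ v * f v = ∑ v ∈ S, f v := by
        rw [Finset.filter_mem_eq_inter, Finset.univ_inter]
        exact Finset.sum_congr rfl fun v hv => by simp [hχ, hv]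
      have e2 : ∑ v ∈ Finset.univ.filter (¬ · ∈ S), χ v * f v = 0 :=
        Finset.sum_eq_zero fun v hv => by simp [hχ, (by simpa using hv : v ∉ S)]
      rw [e1, e2, add_zero]
    rw [this]
    have : ∑ v, 1 * f v = ∑ v ∈ S, f v + ∑ v ∈ Sᶜ, f v := by
      simp [Finset.sum_add_sum_compl]
    rw [this]; ring
  have hf1 : (fun _ => (1 : ℝ)) ⬝ᵥ f = (μ * vol⁻¹) * ((fun _ => (1 : ℝ)) ⬝ᵥ (D *ᵥ g)) := by
    rw [hfg, dotProduct_smul, smul_eq_mul]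
  have hfχ : χ ⬝ᵥ f = (μ * vol⁻¹) * (χ ⬝ᵥ (D *ᵥ g)) := by
    rw [hfg, dotProduct_smul, smul_eq_mul]
  have key : ∑ v ∈ Sᶜ, f v = (χ ⬝ᵥ (Lγ *ᵥ χ) - x ⬝ᵥ (Q *ᵥ x)) / (vol * μ) := by
    rw [hsumc, hf1, hfχ]
    have e1 : (μ * vol⁻¹) * ((fun _ => (1 : ℝ)) ⬝ᵥ (D *ᵥ g)) = 1 := by
      field_simp
      nlinarith [h1Dg]
    have e2 : (μ * vol⁻¹) * (χ ⬝ᵥ (D *ᵥ g)) =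
        1 - (χ ⬝ᵥ (Lγ *ᵥ χ) - x ⬝ᵥ (Q *ᵥ x)) / (vol * μ) := by
      have hμv : μ * (μ * (χ ⬝ᵥ (D *ᵥ g))) = μ * vol - (χ ⬝ᵥ (Lγ *ᵥ χ) - x ⬝ᵥ (Q *ᵥ x)) := by
        rw [hχDg]; rw [mul_sub]; rw [hχLg]
      field_simp
      nlinarith [hμv]
    rw [e1, e2]; try ring
  rw [key]
  have hq : ((fun u => if u ∈ S then (1:ℝ) else 0) ⬝ᵥ
      (Lγ *ᵥ fun u => if u ∈ S then (1:ℝ) else 0)) = χ ⬝ᵥ (Lγ *ᵥ χ) := rfl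
  rw [hq, div_div]
  exact (div_le_div_iff_of_pos_right (by positivity)).mpr (by linarith)
end

section
/- With q sorted in descending order and S_j the top-j vertices, the quantity μ(y(S_j) - f(S_j)) is bounded below by (q_j - q_{j+1})(2A_out(S_j) + D_out(S_j)) - (q_1 - q_N)(2D_out(S_j) + A_out(S_j)), where A_out(S_j) and D_out(S_j) are the total absolute weights of positive and negative edges of W_γ crossing between S_j and S_j^c. -/
open Matrix Finset

/-- With `q` sorted in descending order and `S_j` the top-`j` vertices,
`μ (y(S_j) - f(S_j)) ≥ (q_j - q_{j+1})(2 A_out(S_j) + D_out(S_j)) - (q_1 - q_N)(2 D_out(S_j) + A_out(S_j))`,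
where `A_out` and `D_out` are the total absolute weights of positive and negative edges of
`W_γ = -L^γ` (off-diagonal) crossing between `S_j` and `S_jᶜ`. -/
theorem lgamma_pagerank_sweep_lower_bound {N : ℕ} (Lγ : Matrix (Fin N) (Fin N) ℝ)
    (hsym : Lγᵀ = Lγ) (hdpos : ∀ u, 0 < Lγ u u)
    (hone : Lγ *ᵥ (fun _ => (1 : ℝ)) = 0)
    (μ : ℝ) (hμ : 0 < μ) (y f q : Fin N → ℝ)
    (hq : ∀ u, q u = f u / Lγ u u)
    (hf : Lγ *ᵥ q = μ • (y - f))
    (σ : Equiv.Perm (Fin N))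
    (hsort : ∀ i j : Fin N, i ≤ j → q (σ j) ≤ q (σ i))
    (j : ℕ) (hj0 : 0 < j) (hj : j < N)
    (Sj : Finset (Fin N))
    (hSj : Sj = (Finset.univ.filter fun i : Fin N => (i : ℕ) < j).image σ) :
    μ * ((∑ u ∈ Sj, y u) - ∑ u ∈ Sj, f u) ≥
      (q (σ ⟨j - 1, by omega⟩) - q (σ ⟨j, hj⟩)) *
          (2 * (∑ u ∈ Sj, ∑ v ∈ Sjᶜ, max (-(Lγ u v)) 0) +
            ∑ u ∈ Sj, ∑ v ∈ Sjᶜ, max (Lγ u v) 0) -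
        (q (σ ⟨0, by omega⟩) - q (σ ⟨N - 1, by omega⟩)) *
          (2 * (∑ u ∈ Sj, ∑ v ∈ Sjᶜ, max (Lγ u v) 0) +
            ∑ u ∈ Sj, ∑ v ∈ Sjᶜ, max (-(Lγ u v)) 0) := by
  -- abbreviations
  set gap := q (σ ⟨j - 1, by omega⟩) - q (σ ⟨j, hj⟩) with hgapdef
  set Q := q (σ ⟨0, by omega⟩) - q (σ ⟨N - 1, by omega⟩) with hQdef
  set A := ∑ u ∈ Sj, ∑ v ∈ Sjᶜ, max (-(Lγ u v)) 0 with hAdef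
  set D := ∑ u ∈ Sj, ∑ v ∈ Sjᶜ, max (Lγ u v) 0 with hDdef
  -- membership characterizations
  have hmem : ∀ u : Fin N, u ∈ Sj ↔ ((σ.symm u : Fin N) : ℕ) < j := by
    intro u
    rw [hSj]
    simp only [Finset.mem_image, Finset.mem_filter, Finset.mem_univ, true_and]
    constructor
    · rintro ⟨i, hi, rfl⟩; simpa using hi
    · intro h; exact ⟨σ.symm u, h, by simp⟩
  have hmemc : ∀ v : Fin N, v ∈ Sjᶜ ↔ j ≤ ((σ.symm v : Fin N) : ℕ) := by
    intro v
    simp [Finset.mem_compl, hmem v, not_lt]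
  -- bounds on q values
  have hqu : ∀ u ∈ Sj, q (σ ⟨j - 1, by omega⟩) ≤ q u ∧ q u ≤ q (σ ⟨0, by omega⟩) := by
    intro u hu
    have h := (hmem u).1 hu
    have h1 : (σ.symm u : Fin N) ≤ (⟨j - 1, by omega⟩ : Fin N) := by
      change ((σ.symm u : Fin N) : ℕ) ≤ j - 1; omega
    have h2 : (⟨0, by omega⟩ : Fin N) ≤ (σ.symm u : Fin N) := by
      change 0 ≤ ((σ.symm u : Fin N) : ℕ); omega
    have e : σ (σ.symm u) = u := by simp
    constructor
    · have := hsort _ _ h1; rwa [e] at this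
    · have := hsort _ _ h2; rwa [e] at this
  have hqv : ∀ v ∈ Sjᶜ, q (σ ⟨N - 1, by omega⟩) ≤ q v ∧ q v ≤ q (σ ⟨j, hj⟩) := by
    intro v hv
    have h := (hmemc v).1 hv
    have hlt : ((σ.symm v : Fin N) : ℕ) < N := (σ.symm v).isLt
    have h1 : (⟨j, hj⟩ : Fin N) ≤ (σ.symm v : Fin N) := by
      change j ≤ ((σ.symm v : Fin N) : ℕ); omega
    have h2 : (σ.symm v : Fin N) ≤ (⟨N - 1, by omega⟩ : Fin N) := by
      change ((σ.symm v : Fin N) : ℕ) ≤ N - 1; omega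
    have e : σ (σ.symm v) = v := by simp
    constructor
    · have := hsort _ _ h2; rwa [e] at this
    · have := hsort _ _ h1; rwa [e] at this
  -- gap nonneg, gap ≤ Q
  have hgap0 : 0 ≤ gap := by
    have : (⟨j - 1, by omega⟩ : Fin N) ≤ ⟨j, hj⟩ := by
      change j - 1 ≤ j; omega
    have := hsort _ _ this
    rw [hgapdef]; linarith
  have hgapQ : gap ≤ Q := by
    have h1 : (⟨0, by omega⟩ : Fin N) ≤ (⟨j - 1, by omega⟩ : Fin N) := by
      change (0:ℕ) ≤ j - 1; omega
    have h2 : (⟨j, hj⟩ : Fin N) ≤ (⟨N - 1, by omega⟩ : Fin N) := by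
      change j ≤ N - 1; omega
    have := hsort _ _ h1
    have := hsort _ _ h2
    rw [hgapdef, hQdef]; linarith
  have hA0 : 0 ≤ A := Finset.sum_nonneg fun u _ => Finset.sum_nonneg fun v _ => le_max_right _ _
  have hD0 : 0 ≤ D := Finset.sum_nonneg fun u _ => Finset.sum_nonneg fun v _ => le_max_right _ _
  -- step 1: identity
  have hrow0 : ∀ u : Fin N, ∑ v, Lγ u v = 0 := by
    intro u
    have := congrFun hone u
    simpa [Matrix.mulVec, dotProduct] using this
  have hmain : μ * ((∑ u ∈ Sj, y u) - ∑ u ∈ Sj, f u)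
      = ∑ u ∈ Sj, ∑ v ∈ Sjᶜ, (-(Lγ u v)) * (q u - q v) := by
    have hLq : ∀ u, ∑ v, Lγ u v * q v = μ * (y u - f u) := by
      intro u
      have := congrFun hf u
      simpa [Matrix.mulVec, dotProduct, Pi.smul_apply, Pi.sub_apply,
        smul_eq_mul] using this
    have e1 : μ * ((∑ u ∈ Sj, y u) - ∑ u ∈ Sj, f u)
        = ∑ u ∈ Sj, ∑ v, Lγ u v * q v := by
      rw [mul_sub, Finset.mul_sum, Finset.mul_sum, ← Finset.sum_sub_distrib]
      refine Finset.sum_congr rfl fun u _ => ?_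
      rw [hLq u]; ring
    have e2 : ∀ u, ∑ v, Lγ u v * q v = ∑ v, Lγ u v * (q v - q u) := by
      intro u
      have : ∑ v, Lγ u v * (q v - q u)
          = (∑ v, Lγ u v * q v) - (∑ v, Lγ u v) * q u := by
        rw [Finset.sum_mul, ← Finset.sum_sub_distrib]
        exact Finset.sum_congr rfl fun v _ => by ring
      rw [this, hrow0]; ring
    have e3 : ∀ u, (∑ v, Lγ u v * (q v - q u))
        = (∑ v ∈ Sj, Lγ u v * (q v - q u)) + ∑ v ∈ Sjᶜ, Lγ u v * (q v - q u) := by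
      intro u
      rw [← Finset.sum_add_sum_compl Sj]
    have e4 : ∑ u ∈ Sj, ∑ v ∈ Sj, Lγ u v * (q v - q u) = 0 := by
      have hs : ∀ u v, Lγ u v = Lγ v u := by
        intro u v
        have := congrFun (congrFun hsym v) u
        simpa [Matrix.transpose] using this
      have : (∑ u ∈ Sj, ∑ v ∈ Sj, Lγ u v * (q v - q u))
          = - ∑ u ∈ Sj, ∑ v ∈ Sj, Lγ u v * (q v - q u) := by
        conv_lhs => rw [Finset.sum_comm]
        rw [← Finset.sum_neg_distrib]
        refine Finset.sum_congr rfl fun v _ => ?_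
        rw [← Finset.sum_neg_distrib]
        refine Finset.sum_congr rfl fun u _ => ?_
        rw [hs v u]; ring
      linarith
    rw [e1]
    calc ∑ u ∈ Sj, ∑ v, Lγ u v * q v
        = ∑ u ∈ Sj, ((∑ v ∈ Sj, Lγ u v * (q v - q u)) + ∑ v ∈ Sjᶜ, Lγ u v * (q v - q u)) := by
          exact Finset.sum_congr rfl fun u _ => by rw [e2, e3]
      _ = (∑ u ∈ Sj, ∑ v ∈ Sj, Lγ u v * (q v - q u))
            + ∑ u ∈ Sj, ∑ v ∈ Sjᶜ, Lγ u v * (q v - q u) := Finset.sum_add_distrib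
      _ = ∑ u ∈ Sj, ∑ v ∈ Sjᶜ, (-(Lγ u v)) * (q u - q v) := by
          rw [e4, zero_add]
          exact Finset.sum_congr rfl fun u _ => Finset.sum_congr rfl fun v _ => by ring
  -- step 2: pointwise bound and summation
  have hbound : ∑ u ∈ Sj, ∑ v ∈ Sjᶜ, (-(Lγ u v)) * (q u - q v)
      ≥ gap * A - Q * D := by
    rw [hAdef, hDdef, Finset.mul_sum, Finset.mul_sum, ← Finset.sum_sub_distrib]
    refine Finset.sum_le_sum fun u hu => ?_
    rw [Finset.mul_sum, Finset.mul_sum, ← Finset.sum_sub_distrib]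
    refine Finset.sum_le_sum fun v hv => ?_
    obtain ⟨hu1, hu2⟩ := hqu u hu
    obtain ⟨hv1, hv2⟩ := hqv v hv
    have ha1 : gap ≤ q u - q v := by rw [hgapdef]; linarith
    have ha2 : q u - q v ≤ Q := by rw [hQdef]; linarith
    have hw : -(Lγ u v) = max (-(Lγ u v)) 0 - max (Lγ u v) 0 := by
      rcases le_total (Lγ u v) 0 with h | h
      · rw [max_eq_left (by linarith), max_eq_right h]; ring
      · rw [max_eq_right (by linarith), max_eq_left h]; ring
    have hp : 0 ≤ max (-(Lγ u v)) 0 := le_max_right _ _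
    have hn : 0 ≤ max (Lγ u v) 0 := le_max_right _ _
    have h1 : gap * max (-(Lγ u v)) 0 ≤ max (-(Lγ u v)) 0 * (q u - q v) := by
      nlinarith
    have h2 : max (Lγ u v) 0 * (q u - q v) ≤ Q * max (Lγ u v) 0 := by
      nlinarith
    nlinarith [hw]
  -- conclusion
  rw [hmain]
  have hfinal : gap * A - Q * D ≥ gap * (2 * A + D) - Q * (2 * D + A) := by
    nlinarith [mul_nonneg (sub_nonneg.mpr hgapQ) (add_nonneg hA0 hD0)]
  linarith [hbound, hfinal]
end
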